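/- Vanishing identities for the right twist: if a, b ∈ ℤ satisfy a < b < π(a), then ⟨τ→(A)_a | A_b⟩ = 0 and ⟨τ→(A)_b | A_{π(a)}⟩ = 0. -/

import Mathlib

open scoped BigOperators

/-- The columns of `A` are `n`-periodic. -/
def ColPeriodic (k n : ℕ) (A : ℤ → Fin k → ℂ) : Prop :=
  ∀ a : ℤ, A (a + (n : ℤ)) = A a

/-- `A` has rank `k`, i.e. its columns span `ℂ^k`. -/
def FullRank (k : ℕ) (A : ℤ → Fin k → ℂ) : Prop :=
  Submodule.span ℂ (Set.range A) = ⊤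

/-- The Gale (componentwise) partial order on finite subsets of `ℤ` of equal
cardinality: `B ≼ C` iff they have the same cardinality and, for each `i`, the
`i`-th smallest element of `B` is at most the `i`-th smallest element of `C`
(equivalently, the counting condition below). -/
def galeLE (B C : Finset ℤ) : Prop :=
  B.card = C.card ∧
    ∀ t : ℤ, (B.filter fun x => t ≤ x).card ≤ (C.filter fun x => t ≤ x).card

/-- The columns of `A` indexed by `J` form a basis of `ℂ^k`. -/
def IsColBasis (k : ℕ) (A : ℤ → Fin k → ℂ) (J : Finset ℤ) : Prop :=
  J.card = k ∧ LinearIndependent ℂ (fun j : (J : Set ℤ) => A (j : ℤ)) ∧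
    Submodule.span ℂ (A '' (J : Set ℤ)) = ⊤

/-- `I` is the `≼_a`-minimal `k`-element subset of `{a, a+1, …, a+n-1}` whose
columns form a basis of `ℂ^k` (the `a`-minimal basis `I→_a`). -/
def IsMinBasis (k n : ℕ) (A : ℤ → Fin k → ℂ) (a : ℤ) (I : Finset ℤ) : Prop :=
  I ⊆ Finset.Ico a (a + (n : ℤ)) ∧ IsColBasis k A I ∧
    ∀ J : Finset ℤ, J ⊆ Finset.Ico a (a + (n : ℤ)) → IsColBasis k A J → galeLE I J

/-- `I` is the `≼_{a+1}`-maximal `k`-element subset of `{a-n+1, …, a}` whose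
columns form a basis of `ℂ^k` (the `a`-maximal basis `I←_a`).  Note that on
representatives in `{a-n+1, …, a}` the cyclic order `≺_{a+1}` agrees with the
usual order of `ℤ`. -/
def IsMaxBasis (k n : ℕ) (A : ℤ → Fin k → ℂ) (a : ℤ) (I : Finset ℤ) : Prop :=
  I ⊆ Finset.Ioc (a - (n : ℤ)) a ∧ IsColBasis k A I ∧
    ∀ J : Finset ℤ, J ⊆ Finset.Ioc (a - (n : ℤ)) a → IsColBasis k A J → galeLE J I

/-- The standard symmetric bilinear form `⟨x|y⟩ = ∑ i, x i * y i` on `ℂ^k`. -/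
noncomputable def bil (k : ℕ) (x y : Fin k → ℂ) : ℂ := ∑ i, x i * y i

/-- `π` is the bounded affine permutation of `A`:
`π a` is the least `r` with `a ≤ r ≤ a + n` and `A a ∈ span(A (a+1), …, A r)`. -/
def IsBAP (k n : ℕ) (A : ℤ → Fin k → ℂ) (π : ℤ → ℤ) : Prop :=
  ∀ a : ℤ,
    a ≤ π a ∧ π a ≤ a + (n : ℤ) ∧
    A a ∈ Submodule.span ℂ (A '' Set.Ioc a (π a)) ∧
    ∀ r : ℤ, a ≤ r → r ≤ a + (n : ℤ) →
      A a ∈ Submodule.span ℂ (A '' Set.Ioc a r) → π a ≤ r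

/-- `T` is the right twist `τ→(A)`: for each `a`, the column `T a` pairs to `1`
with `A a` and to `0` with the other columns of the `a`-minimal basis. -/
def IsRightTwist (k n : ℕ) (A T : ℤ → Fin k → ℂ) : Prop :=
  ∀ (a : ℤ) (I : Finset ℤ), IsMinBasis k n A a I →
    ∀ b ∈ I, bil k (T a) (A b) = if b = a then 1 else 0

/-- `T` is the left twist `τ←(A)`: for each `a`, the column `T a` pairs to `1`
with `A a` and to `0` with the other columns of the `a`-maximal basis. -/
def IsLeftTwist (k n : ℕ) (A T : ℤ → Fin k → ℂ) : Prop :=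
  ∀ (a : ℤ) (I : Finset ℤ), IsMaxBasis k n A a I →
    ∀ b ∈ I, bil k (T a) (A b) = if b = a then 1 else 0

/-- `Δ_I(A)`, where `I = {i 0 < i 1 < ⋯ < i (k-1)}` is given by a strictly
monotone enumeration `i : Fin k → ℤ`: the determinant of the `k×k` matrix with
columns `A (i 0), …, A (i (k-1))`. -/
noncomputable def Delta (k : ℕ) (A : ℤ → Fin k → ℂ) (i : Fin k → ℤ) : ℂ :=
  Matrix.det (Matrix.of fun r s : Fin k => A (i s) r)

section TV

open Submodule

variable {k n : ℕ} {A : ℤ → Fin k → ℂ}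

/-- `bil k x ·` as a linear map. -/
noncomputable def bilF (k : ℕ) (x : Fin k → ℂ) : (Fin k → ℂ) →ₗ[ℂ] ℂ where
  toFun y := bil k x y
  map_add' y z := by simp [bil, mul_add, Finset.sum_add_distrib]
  map_smul' c y := by simp [bil, Finset.mul_sum, mul_left_comm]

lemma tv_period (hper : ColPeriodic k n A) (m c : ℤ) : A (c + m * (n : ℤ)) = A c := by
  induction m using Int.induction_on with
  | zero => simp
  | succ i ih =>
      have h1 : c + ((i : ℤ) + 1) * (n : ℤ) = (c + i * n) + n := by ring
      rw [h1, hper, ih]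
  | pred i ih =>
      have h1 : c + (-(i : ℤ) - 1) * (n : ℤ) + (n : ℤ) = c + (-(i:ℤ)) * n := by ring
      have := hper (c + (-(i : ℤ) - 1) * (n : ℤ))
      rw [h1] at this
      rw [← this, ih]

lemma tv_window_span (hn : 0 < n) (hper : ColPeriodic k n A) (hrank : FullRank k A) (a : ℤ) :
    span ℂ (A '' Set.Ico a (a + (n : ℤ))) = ⊤ := by
  rw [eq_top_iff, ← hrank]
  rw [Submodule.span_le]
  rintro _ ⟨j, rfl⟩
  have hn' : (0 : ℤ) < (n : ℤ) := by exact_mod_cast hn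
  set q := (j - a) / (n : ℤ) with hq
  set r := (j - a) % (n : ℤ) with hr
  have hqr : (n : ℤ) * q + r = j - a := Int.mul_ediv_add_emod _ _
  have hr0 : 0 ≤ r := Int.emod_nonneg _ (by omega)
  have hrn : r < (n : ℤ) := Int.emod_lt_of_pos _ hn'
  have : A j = A (a + r) := by
    have : j = (a + r) + q * (n : ℤ) := by rw [mul_comm q]; omega
    rw [this, tv_period hper]
  rw [this]
  exact Submodule.subset_span ⟨a + r, ⟨by omega, by omega⟩, rfl⟩

end TV

section MinI

open Submodule

variable {k n : ℕ} {A : ℤ → Fin k → ℂ}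

noncomputable def minI (k n : ℕ) (A : ℤ → Fin k → ℂ) (a : ℤ) : Finset ℤ :=
  @Finset.filter _ (fun j => A j ∉ Submodule.span ℂ (A '' Set.Ico a j))
    (Classical.decPred _) (Finset.Ico a (a + (n : ℤ)))

lemma mem_minI {a j : ℤ} :
    j ∈ minI k n A a ↔ (a ≤ j ∧ j < a + (n : ℤ)) ∧ A j ∉ span ℂ (A '' Set.Ico a j) := by
  simp [minI, Finset.mem_filter, Finset.mem_Ico, and_comm]

lemma minI_subset {a : ℤ} : minI k n A a ⊆ Finset.Ico a (a + (n : ℤ)) :=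
  fun x hx => Finset.mem_Ico.mpr (mem_minI.mp hx).1

lemma tv_greedy (a : ℤ) :
    ∀ j : ℤ, a ≤ j → j < a + (n : ℤ) →
      A j ∈ span ℂ (A '' {c : ℤ | c ∈ minI k n A a ∧ c ≤ j}) := by
  have H : ∀ N : ℕ, ∀ j : ℤ, a ≤ j → j < a + (n : ℤ) → (j - a).toNat = N →
      A j ∈ span ℂ (A '' {c : ℤ | c ∈ minI k n A a ∧ c ≤ j}) := by
    intro N
    induction N using Nat.strong_induction_on with
    | _ N ih =>
      intro j hja hjn hN
      by_cases hj : A j ∈ span ℂ (A '' Set.Ico a j)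
      · refine Submodule.span_le.mpr ?_ hj
        rintro _ ⟨c, hc, rfl⟩
        have hc1 : a ≤ c := hc.1
        have hc2 : c < j := hc.2
        have := ih (c - a).toNat (by omega) c hc1 (by omega) rfl
        refine Submodule.span_mono ?_ this
        exact Set.image_mono (fun x hx => ⟨hx.1, le_trans hx.2 (le_of_lt hc2)⟩)
      · exact Submodule.subset_span ⟨j, ⟨mem_minI.mpr ⟨⟨hja, hjn⟩, hj⟩, le_refl j⟩, rfl⟩
  exact fun j h1 h2 => H (j - a).toNat j h1 h2 rfl

lemma tv_injOn (a : ℤ) : Set.InjOn A ↑(minI k n A a) := by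
  intro c hc c' hc' hA
  by_contra hne
  rcases Ne.lt_or_gt hne with h | h
  · exact (mem_minI.mp hc').2 (hA ▸ Submodule.subset_span
      ⟨c, ⟨(mem_minI.mp hc).1.1, h⟩, rfl⟩)
  · exact (mem_minI.mp hc).2 (hA ▸ Submodule.subset_span
      ⟨c', ⟨(mem_minI.mp hc').1.1, h⟩, rfl⟩)

lemma tv_indep (a : ℤ) :
    ∀ s : Finset ℤ, s ⊆ minI k n A a →
      LinearIndependent ℂ (fun j : (s : Set ℤ) => A (j : ℤ)) := by
  classical
  intro s
  induction s using Finset.induction_on_max with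
  | empty =>
      intro _
      haveI : IsEmpty (((∅ : Finset ℤ) : Set ℤ)) := by simp
      exact linearIndependent_empty_type
  | insert c s hmax ih =>
      intro hsub
      have hc : c ∈ minI k n A a := hsub (Finset.mem_insert_self _ _)
      have hsub' : s ⊆ minI k n A a := fun x hx => hsub (Finset.mem_insert_of_mem hx)
      have hcs : c ∉ (s : Set ℤ) := fun hx => lt_irrefl c (hmax c hx)
      have hssub : (s : Set ℤ) ⊆ Set.Ico a c := fun x hx =>
        ⟨(mem_minI.mp (hsub' hx)).1.1, hmax x hx⟩
      rw [show ((insert c s : Finset ℤ) : Set ℤ) = insert c (s : Set ℤ) from Finset.coe_insert c s]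
      refine (linearIndepOn_insert hcs).mpr ?_
      refine ⟨ih hsub', fun hsp => (mem_minI.mp hc).2 ?_⟩
      exact Submodule.span_mono (Set.image_mono hssub) hsp

end MinI

section MinBasis

open Submodule

variable {k n : ℕ} {A : ℤ → Fin k → ℂ}

lemma tv_image_indep (a : ℤ) :
    LinearIndependent ℂ ((↑) : (A '' ((minI k n A a : Finset ℤ) : Set ℤ)) → (Fin k → ℂ)) :=
  (linearIndepOn_iff_image (tv_injOn a)).mp (tv_indep a _ subset_rfl)

lemma tv_span_top (hn : 0 < n) (hper : ColPeriodic k n A) (hrank : FullRank k A) (a : ℤ) :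
    span ℂ (A '' ((minI k n A a : Finset ℤ) : Set ℤ)) = ⊤ := by
  rw [eq_top_iff, ← tv_window_span hn hper hrank a, Submodule.span_le]
  rintro _ ⟨j, hj, rfl⟩
  have := tv_greedy (A := A) (n := n) a j hj.1 hj.2
  refine Submodule.span_mono ?_ this
  exact Set.image_mono (fun x hx => hx.1)

lemma tv_finrank_k : Module.finrank ℂ (Fin k → ℂ) = k := by
  rw [Module.finrank_pi]; simp

lemma tv_card (hn : 0 < n) (hper : ColPeriodic k n A) (hrank : FullRank k A) (a : ℤ) :
    (minI k n A a).card = k := by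
  classical
  have hind : LinearIndependent ℂ
      ((↑) : (((minI k n A a).image A : Finset (Fin k → ℂ)) : Set (Fin k → ℂ)) → (Fin k → ℂ)) := by
    rw [Finset.coe_image]; exact tv_image_indep a
  have h1 := finrank_span_finset_eq_card hind
  rw [Finset.coe_image] at h1
  rw [tv_span_top hn hper hrank a] at h1
  rw [finrank_top, tv_finrank_k] at h1
  rw [Finset.card_image_of_injOn (tv_injOn a)] at h1
  exact h1.symm

lemma tv_rank_filter (hn : 0 < n) (hper : ColPeriodic k n A) (hrank : FullRank k A)
    (a t : ℤ) (ht : t ≤ a + (n : ℤ)) :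
    ((minI k n A a).filter (fun c => c < t)).card
      = Module.finrank ℂ (span ℂ (A '' Set.Ico a t)) := by
  classical
  set s := (minI k n A a).filter (fun c => c < t) with hs
  have hssub : s ⊆ minI k n A a := Finset.filter_subset _ _
  have hspan : span ℂ (A '' (s : Set ℤ)) = span ℂ (A '' Set.Ico a t) := by
    apply le_antisymm
    · refine Submodule.span_mono (Set.image_mono ?_)
      intro x hx
      have hx' := Finset.mem_filter.mp hx
      exact ⟨(mem_minI.mp hx'.1).1.1, hx'.2⟩
    · rw [Submodule.span_le]
      rintro _ ⟨j, hj, rfl⟩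
      have := tv_greedy (A := A) (n := n) a j hj.1 (lt_of_lt_of_le hj.2 ht)
      refine SetLike.le_def.mp (Submodule.span_mono (Set.image_mono ?_)) this
      intro x hx
      exact Finset.mem_filter.mpr ⟨hx.1, lt_of_le_of_lt hx.2 hj.2⟩
  have hinj : Set.InjOn A ↑s := (tv_injOn a).mono (by exact_mod_cast hssub)
  have hind : LinearIndependent ℂ
      ((↑) : ((s.image A : Finset (Fin k → ℂ)) : Set (Fin k → ℂ)) → (Fin k → ℂ)) := by
    rw [Finset.coe_image]
    exact ((linearIndepOn_iff_image hinj).mp (tv_indep a s hssub))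
  have h1 := finrank_span_finset_eq_card hind
  rw [Finset.coe_image, hspan, Finset.card_image_of_injOn hinj] at h1
  exact h1.symm

lemma tv_colBasis_injOn {J : Finset ℤ} (hJ : IsColBasis k A J) : Set.InjOn A ↑J := by
  have h := hJ.2.1.injective
  intro x hx y hy hxy
  have := h (a₁ := ⟨x, hx⟩) (a₂ := ⟨y, hy⟩) hxy
  exact Subtype.mk_eq_mk.mp this

lemma tv_isMinBasis (hn : 0 < n) (hper : ColPeriodic k n A) (hrank : FullRank k A) (a : ℤ) :
    IsMinBasis k n A a (minI k n A a) := by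
  classical
  refine ⟨minI_subset, ⟨tv_card hn hper hrank a, tv_indep a _ subset_rfl,
    tv_span_top hn hper hrank a⟩, ?_⟩
  intro J hJsub hJ
  have hJcard : J.card = k := hJ.1
  refine ⟨(tv_card hn hper hrank a).trans hJcard.symm, ?_⟩
  intro t
  -- reduce to counting small elements
  have hsplit : ∀ X : Finset ℤ, (X.filter fun x => t ≤ x).card + (X.filter fun x => x < t).card
      = X.card := by
    intro X
    have := Finset.card_filter_add_card_filter_not
      (s := X) (p := fun x => t ≤ x)
    simpa [not_le] using this
  have hI := hsplit (minI k n A a)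
  have hJ' := hsplit J
  have hIc := tv_card hn hper hrank a
  -- main inequality on the complements
  have key : (J.filter fun x => x < t).card ≤ ((minI k n A a).filter fun x => x < t).card := by
    by_cases hta : t ≤ a
    · have : (J.filter fun x => x < t) = ∅ := by
        apply Finset.filter_eq_empty_iff.mpr
        intro x hx
        have := (Finset.mem_Ico.mp (hJsub hx)).1
        omega
      simp [this]
    by_cases htn : t ≤ a + (n : ℤ)
    · rw [tv_rank_filter hn hper hrank a t htn]
      -- |J ∩ [a,t)| ≤ finrank of span
      have hinj : Set.InjOn A ↑(J.filter fun x => x < t) :=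
        (tv_colBasis_injOn hJ).mono (by exact_mod_cast Finset.filter_subset _ _)
      have hindJ : LinearIndependent ℂ
          ((↑) : (((J.filter fun x => x < t).image A : Finset (Fin k → ℂ)) : Set (Fin k → ℂ))
            → (Fin k → ℂ)) := by
        rw [Finset.coe_image]
        refine ((linearIndepOn_iff_image hinj).mp ?_)
        have hfull := (linearIndepOn_iff_image (tv_colBasis_injOn hJ)).mp hJ.2.1
        have hmono : A '' ((J.filter fun x => x < t : Finset ℤ) : Set ℤ) ⊆ A '' (J : Set ℤ) :=
          Set.image_mono (by exact_mod_cast Finset.filter_subset _ _)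
        exact (linearIndepOn_iff_image hinj).mpr (hfull.mono hmono)
      have h1 := finrank_span_finset_eq_card hindJ
      rw [Finset.coe_image, Finset.card_image_of_injOn hinj] at h1
      rw [← h1]
      apply Submodule.finrank_mono
      refine Submodule.span_mono (Set.image_mono ?_)
      intro x hx
      have hx' := Finset.mem_filter.mp hx
      exact ⟨(Finset.mem_Ico.mp (hJsub hx'.1)).1, hx'.2⟩
    · -- t > a + n : both filters are everything
      push_neg at htn
      have hJall : (J.filter fun x => x < t) = J := by
        apply Finset.filter_true_of_mem
        intro x hx
        have := (Finset.mem_Ico.mp (hJsub hx)).2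
        omega
      have hIall : ((minI k n A a).filter fun x => x < t) = minI k n A a := by
        apply Finset.filter_true_of_mem
        intro x hx
        have := (Finset.mem_Ico.mp (minI_subset hx)).2
        omega
      rw [hJall, hIall, hJcard, hIc]
  omega

end MinBasis

/-- vanishing identities for the right twist: if
`a < b < π a`, then `⟨τ→(A) a | A b⟩ = 0` and `⟨τ→(A) b | A (π a)⟩ = 0`. -/
theorem twist_vanishing
    (k n : ℕ) (hk : 1 ≤ k) (hkn : k ≤ n)
    (A : ℤ → Fin k → ℂ) (hper : ColPeriodic k n A) (hrank : FullRank k A)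
    (π : ℤ → ℤ) (hπ : IsBAP k n A π)
    (T : ℤ → Fin k → ℂ) (hT : IsRightTwist k n A T)
    (a b : ℤ) (hab : a < b) (hbpi : b < π a) :
    bil k (T a) (A b) = 0 ∧ bil k (T b) (A (π a)) = 0 := by
  have hn : 0 < n := lt_of_lt_of_le hk hkn
  obtain ⟨ha1, ha2, ha3, ha4⟩ := hπ a
  have hmin_a := tv_isMinBasis hn hper hrank a
  constructor
  · -- Part 1
    set S : Set (Fin k → ℂ) := A '' {c : ℤ | c ∈ minI k n A a ∧ a < c ∧ c ≤ b} with hS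
    have hbw : A b ∈ Submodule.span ℂ (A '' {c : ℤ | c ∈ minI k n A a ∧ c ≤ b}) :=
      tv_greedy a b (le_of_lt hab) (by omega)
    have hsub : A '' {c : ℤ | c ∈ minI k n A a ∧ c ≤ b} ⊆ insert (A a) S := by
      rintro _ ⟨c, ⟨hc1, hc2⟩, rfl⟩
      rcases eq_or_lt_of_le (mem_minI.mp hc1).1.1 with h | h
      · exact Or.inl (by rw [← h])
      · exact Or.inr ⟨c, ⟨hc1, h, hc2⟩, rfl⟩
    have hbw' : A b ∈ Submodule.span ℂ (insert (A a) S) :=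
      Submodule.span_mono hsub hbw
    by_cases hbS : A b ∈ Submodule.span ℂ S
    · -- the pairing vanishes on span S
      have hker : S ⊆ ↑(LinearMap.ker (bilF k (T a))) := by
        rintro _ ⟨c, ⟨hc1, hc2, _⟩, rfl⟩
        have hv := hT a (minI k n A a) hmin_a c hc1
        have : bil k (T a) (A c) = 0 := by rw [hv, if_neg (by omega : c ≠ a)]
        exact LinearMap.mem_ker.mpr this
      have := Submodule.span_le.mpr hker hbS
      exact LinearMap.mem_ker.mp this
    · exfalso
      have hex : A a ∈ Submodule.span ℂ (insert (A b) S) :=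
        mem_span_insert_exchange hbw' hbS
      have hsub2 : insert (A b) S ⊆ A '' Set.Ioc a b := by
        rintro x hx
        rcases hx with rfl | ⟨c, ⟨_, hc2, hc3⟩, rfl⟩
        · exact ⟨b, ⟨hab, le_refl b⟩, rfl⟩
        · exact ⟨c, ⟨hc2, hc3⟩, rfl⟩
      have := ha4 b (le_of_lt hab) (by omega) (Submodule.span_mono hsub2 hex)
      omega
  · -- Part 2
    have hmin_b := tv_isMinBasis hn hper hrank b
    have hpmem : π a ∈ minI k n A b := by
      rw [mem_minI]
      refine ⟨⟨le_of_lt hbpi, by omega⟩, ?_⟩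
      intro hsp
      have hkey : Submodule.span ℂ (A '' Set.Ioc a (π a))
          ≤ Submodule.span ℂ (A '' Set.Ioc a (π a - 1)) := by
        rw [Submodule.span_le]
        rintro _ ⟨j, hj, rfl⟩
        by_cases hjp : j = π a
        · subst hjp
          refine SetLike.le_def.mp
            (Submodule.span_mono (Set.image_mono (fun x hx => ?_))) hsp
          obtain ⟨h1, h2⟩ := hx
          exact ⟨by omega, by omega⟩
        · obtain ⟨h1, h2⟩ := hj
          exact Submodule.subset_span ⟨j, ⟨h1, by omega⟩, rfl⟩
      have := ha4 (π a - 1) (by omega) (by omega) (hkey ha3)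
      omega
    have := hT b (minI k n A b) hmin_b (π a) hpmem
    rw [this, if_neg (by omega : π a ≠ b)]
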